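/- Let p ≥ 1 and let P(y) = y^p + Σ_{0≤h≤p-1} γ_h·y^h ∈ ℝ[y] be a monic polynomial of degree p. For every map ε : {1,…,p} → {1,−1} with ε(1) = 1 there exist positive integers N_{ε,1}, …, N_{ε,p} such that for all t₁, t₂ ∈ ℝ: P(t₂) = P(t₁) + Σ_{k=1}^{p} ε(k)·(N_{ε,k}/k!)·P^{(k)}(a_k)·(t₂ − t₁)^k, where for 1 ≤ k ≤ p−1 one sets a_k = t₁ if ε(k) = ε(k+1) and a_k = t₂ otherwise (the value a_p is irrelevant since P^{(p)} is the constant p!). -/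

import Mathlib

open Polynomial

private def dd (f : ℕ → ℤ) : ℕ → ℤ := fun m => f (m + 1) - f m

private lemma dd_iter_apply (f : ℕ → ℤ) (s m : ℕ) :
    dd^[s + 1] f m = dd^[s] f (m + 1) - dd^[s] f m := by
  rw [Function.iterate_succ_apply']; rfl

private lemma dd_iter_sub (g f : ℕ → ℤ) (s : ℕ) :
    dd^[s] (fun m => g m - f m) = fun m => dd^[s] g m - dd^[s] f m := by
  induction s with
  | zero => rfl
  | succ s ih =>
    rw [Function.iterate_succ_apply', ih, Function.iterate_succ_apply',
      Function.iterate_succ_apply']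
    funext m
    simp only [dd]
    ring

private def cb (k : ℕ) : ℕ → ℤ := fun m => (m.choose k : ℤ)

private lemma dd_cb_mul (k : ℕ) (c : ℤ) (s : ℕ) :
    dd^[s] (fun m => cb k m * c) = fun m => (if s ≤ k then cb (k - s) m * c else 0) := by
  induction s with
  | zero => simp [cb]
  | succ s ih =>
    rw [Function.iterate_succ_apply', ih]
    funext m
    by_cases h : s + 1 ≤ k
    · have hs : s ≤ k := by omega
      simp only [dd, if_pos hs, if_pos h]
      have hk : k - s = (k - s - 1) + 1 := by omega
      have hk2 : k - (s + 1) = k - s - 1 := by omega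
      rw [hk, hk2]
      simp only [cb, Nat.choose_succ_succ]
      push_cast
      ring
    · by_cases hs : s ≤ k
      · have hsk : s = k := by omega
        subst hsk
        simp only [dd, if_pos (le_refl s), if_neg h, Nat.sub_self]
        simp [cb]
      · simp only [dd, if_neg hs, if_neg h]
        ring

private def Good (K : ℕ) (f : ℕ → ℤ) : Prop :=
  (∀ s m, K ≤ s + m → 0 ≤ dd^[s] f m) ∧
  (∀ s m, s ≤ K → K + 1 ≤ s + m → 1 ≤ dd^[s] f m) ∧
  (∀ s m, K < s → dd^[s] f m = 0)

private lemma good_one : Good 0 (fun _ => (1 : ℤ)) := by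
  have h : ∀ s, dd^[s] (fun _ => (1 : ℤ)) = fun _ => if s = 0 then 1 else 0 := by
    intro s
    induction s with
    | zero => simp
    | succ s ih =>
      rw [Function.iterate_succ_apply', ih]
      funext m
      by_cases hs : s = 0 <;> simp [dd, hs]
  refine ⟨?_, ?_, ?_⟩
  · intro s m _
    rw [h]
    split <;> norm_num
  · intro s m hs _
    have : s = 0 := by omega
    subst this
    rw [h]
    simp
  · intro s m hs
    have : s ≠ 0 := by omega
    rw [h]
    simp [this]

private lemma Good.step {K k : ℕ} {f : ℕ → ℤ} (h : Good K f) (hk : K < k) :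
    Good k (fun m => cb k m * f k - f m) := by
  obtain ⟨h0, h1, h2⟩ := h
  set f' : ℕ → ℤ := fun m => cb k m * f k - f m with hf'
  have hc : 1 ≤ f k := h1 0 k (Nat.zero_le K) (by omega)
  have hdds : ∀ s, dd^[s] f' = fun m => (if s ≤ k then cb (k - s) m * f k else 0) - dd^[s] f m := by
    intro s
    have := dd_iter_sub (fun m => cb k m * f k) f s
    rw [dd_cb_mul] at this
    exact this
  have chain : ∀ j, j ≤ k → dd^[j] f (k - j) ≤ f k := by
    intro j
    induction j with
    | zero => simp
    | succ j ih =>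
      intro hj
      have e := dd_iter_apply f j (k - (j + 1))
      have e2 : k - (j + 1) + 1 = k - j := by omega
      rw [e2] at e
      have h0' : 0 ≤ dd^[j] f (k - (j + 1)) := h0 j _ (by omega)
      have := ih (by omega)
      linarith
  have CL : ∀ t s, s + t = k →
      0 ≤ dd^[s] f' (k - s) ∧ ∀ d : ℕ, 1 ≤ dd^[s] f' (k - s + (d + 1)) := by
    intro t
    induction t with
    | zero =>
      intro s hs
      have hsk : s = k := by omega
      subst hsk
      have hval : ∀ m, dd^[s] f' m = f s := by
        intro m
        rw [hdds]
        simp only [le_refl, if_pos, Nat.sub_self]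
        rw [h2 s m hk]
        simp [cb]
      constructor
      · rw [hval]; linarith
      · intro d; rw [hval]; linarith
    | succ t iht =>
      intro s hs
      have IH := iht (s + 1) (by omega)
      have hs_le : s ≤ k := by omega
      have hbase : 0 ≤ dd^[s] f' (k - s) := by
        rw [hdds]
        simp only [if_pos hs_le]
        have h1' : cb (k - s) (k - s) = 1 := by simp [cb]
        rw [h1']
        have := chain s hs_le
        linarith
      have hstep : ∀ d : ℕ, 1 ≤ dd^[s + 1] f' (k - s + d) := by
        intro d
        have e : k - s + d = k - (s + 1) + (d + 1) := by omega
        rw [e]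
        exact IH.2 d
      refine ⟨hbase, ?_⟩
      intro d
      induction d with
      | zero =>
        have e := dd_iter_apply f' s (k - s)
        have := hstep 0
        simp only [Nat.add_zero] at this
        linarith
      | succ d ihd =>
        have e := dd_iter_apply f' s (k - s + (d + 1))
        have h2' := hstep (d + 1)
        have e2 : k - s + (d + 1) + 1 = k - s + (d + 1 + 1) := by omega
        rw [e2] at e
        linarith
  refine ⟨?_, ?_, ?_⟩
  · intro s m hsm
    by_cases hs : s ≤ k
    · have hCL := CL (k - s) s (by omega)
      by_cases hm : m = k - s
      · rw [hm]; exact hCL.1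
      · have hd : m = k - s + ((m - (k - s) - 1) + 1) := by omega
        rw [hd]
        linarith [hCL.2 (m - (k - s) - 1)]
    · rw [hdds]
      simp only [if_neg hs]
      rw [h2 s m (by omega)]
      simp
  · intro s m hsK hsm
    have hCL := CL (k - s) s (by omega)
    have hd : m = k - s + ((m - (k - s) - 1) + 1) := by omega
    rw [hd]
    exact hCL.2 _
  · intro s m hks
    rw [hdds]
    simp only [if_neg (by omega : ¬ s ≤ k)]
    rw [h2 s m (by omega)]
    simp

private def gseq (p : ℕ) (ε : ℕ → ℤ) : ℕ → ℕ → ℤ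
  | 0 => fun _ => 1
  | k + 1 =>
    if (k + 1) < p ∧ ε (k + 1) ≠ ε (k + 2) then
      fun m => cb (k + 1) m * gseq p ε k (k + 1) - gseq p ε k m
    else gseq p ε k

private lemma gseq_good (p : ℕ) (ε : ℕ → ℤ) (k : ℕ) : ∃ K, K ≤ k ∧ Good K (gseq p ε k) := by
  induction k with
  | zero => exact ⟨0, le_refl 0, good_one⟩
  | succ k ih =>
    obtain ⟨K, hK, hG⟩ := ih
    by_cases hc : (k + 1) < p ∧ ε (k + 1) ≠ ε (k + 2)
    · refine ⟨k + 1, le_refl _, ?_⟩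
      rw [gseq, if_pos hc]
      exact hG.step (by omega)
    · exact ⟨K, by omega, by rw [gseq, if_neg hc]; exact hG⟩

private lemma gseq_pos (p : ℕ) (ε : ℕ → ℤ) (j : ℕ) (hj : 1 ≤ j) :
    1 ≤ gseq p ε (j - 1) j := by
  obtain ⟨K, hK, hG⟩ := gseq_good p ε (j - 1)
  exact hG.2.1 0 j (Nat.zero_le K) (by omega)

private lemma gseq_sum (p : ℕ) (ε : ℕ → ℤ)
    (hε : ∀ k, 1 ≤ k → k ≤ p → ε k = 1 ∨ ε k = -1) (hε1 : ε 1 = 1) :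
    ∀ j m, j < m → m ≤ p →
      ε (j + 1) * gseq p ε j m
        = 1 - ∑ k ∈ Finset.Icc 1 j,
            (if k < p ∧ ε k ≠ ε (k + 1) then
              (m.choose k : ℤ) * (ε k * gseq p ε (k - 1) k) else 0) := by
  intro j
  induction j with
  | zero =>
    intro m _ _
    simp [gseq, hε1]
  | succ j ih =>
    intro m hm hmp
    rw [Finset.sum_Icc_succ_top (by omega : 1 ≤ j + 1)]
    by_cases hc : (j + 1) < p ∧ ε (j + 1) ≠ ε (j + 2)
    · rw [gseq, if_pos hc, if_pos hc]
      have hj2 : ε (j + 2) = - ε (j + 1) := by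
        have e1 := hε (j + 1) (by omega) (by omega)
        have e2 := hε (j + 2) (by omega) (by omega)
        have hne := hc.2
        rcases e1 with h | h <;> rcases e2 with h' | h' <;> omega
      have H1 := ih m (by omega) hmp
      simp only [Nat.add_sub_cancel, hj2, cb]
      linear_combination H1
    · rw [gseq, if_neg hc, if_neg hc]
      have hj2 : ε (j + 2) = ε (j + 1) := by
        have : ¬ (ε (j + 1) ≠ ε (j + 2)) := by
          intro hne
          exact hc ⟨by omega, hne⟩
        omega
      rw [hj2]
      rw [ih m (by omega) hmp]
      ring

private lemma gseq_CI (p : ℕ) (ε : ℕ → ℤ)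
    (hε : ∀ k, 1 ≤ k → k ≤ p → ε k = 1 ∨ ε k = -1) (hε1 : ε 1 = 1)
    (m : ℕ) (h1 : 1 ≤ m) (hmp : m ≤ p) :
    ∑ k ∈ Finset.Icc 1 m,
      (if (k < p ∧ ε k ≠ ε (k + 1)) ∨ k = m then
        (m.choose k : ℤ) * (ε k * gseq p ε (k - 1) k) else 0) = 1 := by
  obtain ⟨n, rfl⟩ : ∃ n, m = n + 1 := ⟨m - 1, by omega⟩
  rw [Finset.sum_Icc_succ_top (by omega : 1 ≤ n + 1)]
  have hlast : ((n + 1 < p ∧ ε (n + 1) ≠ ε (n + 2)) ∨ n + 1 = n + 1) := Or.inr rfl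
  rw [if_pos hlast]
  have hcongr : ∀ k ∈ Finset.Icc 1 n,
      (if (k < p ∧ ε k ≠ ε (k + 1)) ∨ k = n + 1 then
        ((n + 1).choose k : ℤ) * (ε k * gseq p ε (k - 1) k) else 0)
      = (if k < p ∧ ε k ≠ ε (k + 1) then
        ((n + 1).choose k : ℤ) * (ε k * gseq p ε (k - 1) k) else 0) := by
    intro k hk
    have hkn : k ≠ n + 1 := by
      have := Finset.mem_Icc.mp hk
      omega
    by_cases hc : k < p ∧ ε k ≠ ε (k + 1)
    · rw [if_pos (Or.inl hc), if_pos hc]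
    · rw [if_neg ?_, if_neg hc]
      rintro (h | h)
      · exact hc h
      · exact hkn h
  rw [Finset.sum_congr rfl hcongr]
  have H := gseq_sum p ε hε hε1 n (n + 1) (by omega) hmp
  simp only [Nat.choose_self, Nat.add_sub_cancel]
  push_cast
  linarith

private lemma taylor_expand (Q : Polynomial ℝ) (n : ℕ) (hn : Q.natDegree ≤ n) (a x : ℝ) :
    Q.eval x = ∑ j ∈ Finset.range (n + 1),
      (Polynomial.derivative^[j] Q).eval a * (x - a) ^ j / (j.factorial : ℝ) := by
  have h1 : Q.eval x = (Polynomial.taylor a Q).eval (x - a) := by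
    rw [Polynomial.taylor_eval, sub_add_cancel]
  rw [h1, Polynomial.eval_eq_sum_range' (n := n + 1)
    (by rw [Polynomial.natDegree_taylor]; omega) (x - a)]
  refine Finset.sum_congr rfl fun j _ => ?_
  rw [Polynomial.taylor_coeff]
  have h3 : Polynomial.derivative^[j] Q = j.factorial • (Polynomial.hasseDeriv j) Q := by
    rw [← Polynomial.factorial_smul_hasseDeriv]
    rfl
  have hfac : (j.factorial : ℝ) ≠ 0 := Nat.cast_ne_zero.mpr (Nat.factorial_ne_zero j)
  rw [h3, nsmul_eq_mul, Polynomial.eval_mul, Polynomial.eval_natCast]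
  field_simp

private noncomputable def Wf (p : ℕ) (ε : ℕ → ℤ) (P : Polynomial ℝ) (t₁ t₂ : ℝ) (k m : ℕ) : ℝ :=
  (((if k ≤ m ∧ ((k < p ∧ ε k ≠ ε (k + 1)) ∨ k = m) then
      (m.choose k : ℤ) * (ε k * gseq p ε (k - 1) k) else 0) : ℤ) : ℝ) *
    ((Polynomial.derivative^[m] P).eval t₁ * (t₂ - t₁) ^ m / (m.factorial : ℝ))

private def Nf (p : ℕ) (ε : ℕ → ℤ) (k : ℕ) : ℕ := (gseq p ε (k - 1) k).toNat

/-- Mixed Taylor Formulas (Proposition `prop2.4.4`): for a monic polynomial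
`P = y^p + ∑ γ_h y^h` of degree `p ≥ 1` over `ℝ` and every sign pattern
`ε : {1,…,p} → {1,-1}` with `ε 1 = 1`, there exist positive integers
`N_{ε,1}, …, N_{ε,p}` such that for all `t₁ t₂`,
`P(t₂) = P(t₁) + ∑_{k=1}^p ε(k) (N_{ε,k}/k!) P^{(k)}(a_k) (t₂-t₁)^k`,
where `a_k = t₁` if `ε(k) = ε(k+1)` and `a_k = t₂` otherwise (for `k < p`),
the choice of `a_p` being irrelevant since `P^{(p)}` is constant. -/
theorem mixed_taylor_formula (p : ℕ) (hp : 1 ≤ p) (P : Polynomial ℝ)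
    (hmon : P.Monic) (hdeg : P.natDegree = p)
    (ε : ℕ → ℤ) (hε : ∀ k, 1 ≤ k → k ≤ p → ε k = 1 ∨ ε k = -1) (hε1 : ε 1 = 1) :
    ∃ N : ℕ → ℕ, (∀ k, 1 ≤ k → k ≤ p → 0 < N k) ∧
      ∀ t₁ t₂ : ℝ,
        P.eval t₂ = P.eval t₁ +
          ∑ k ∈ Finset.Icc 1 p,
            (ε k : ℝ) * (N k : ℝ) / (k.factorial : ℝ) *
              (Polynomial.derivative^[k] P).eval
                (if k = p then t₁ else if ε k = ε (k + 1) then t₁ else t₂) *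
              (t₂ - t₁) ^ k := by
  classical
  refine ⟨Nf p ε, ?_, ?_⟩
  · intro k hk1 _
    have h1 := gseq_pos p ε k hk1
    show 0 < (gseq p ε (k - 1) k).toNat
    omega
  · intro t₁ t₂
    have hNM : ∀ k, 1 ≤ k →
        (ε k : ℝ) * ((Nf p ε k : ℕ) : ℝ) = ((ε k * gseq p ε (k - 1) k : ℤ) : ℝ) := by
      intro k hk
      have h1 := gseq_pos p ε k hk
      have h2 : ((gseq p ε (k - 1) k).toNat : ℤ) = gseq p ε (k - 1) k :=
        Int.toNat_of_nonneg (by linarith)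
      show (ε k : ℝ) * (((gseq p ε (k - 1) k).toNat : ℕ) : ℝ) = _
      have h3 : (((gseq p ε (k - 1) k).toNat : ℕ) : ℝ) = ((gseq p ε (k - 1) k : ℤ) : ℝ) := by
        conv_rhs => rw [← h2]
        exact (Int.cast_natCast _).symm
      rw [h3]
      push_cast
      ring
    have hTaylorP : P.eval t₂ = ∑ m ∈ Finset.range (p + 1),
        (Polynomial.derivative^[m] P).eval t₁ * (t₂ - t₁) ^ m / (m.factorial : ℝ) :=
      taylor_expand P p (le_of_eq hdeg) t₁ t₂
    have hsplit : (∑ m ∈ Finset.range (p + 1),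
          (Polynomial.derivative^[m] P).eval t₁ * (t₂ - t₁) ^ m / (m.factorial : ℝ))
        = P.eval t₁ + ∑ m ∈ Finset.Icc 1 p,
            (Polynomial.derivative^[m] P).eval t₁ * (t₂ - t₁) ^ m / (m.factorial : ℝ) := by
      rw [Finset.sum_range_succ']
      have h0 : (Polynomial.derivative^[0] P).eval t₁ * (t₂ - t₁) ^ 0
          / ((Nat.factorial 0 : ℕ) : ℝ) = P.eval t₁ := by
        simp
      rw [h0, add_comm]
      congr 1
      rw [show Finset.Icc 1 p = Finset.Ico 1 (p + 1) from (Finset.Ico_add_one_right_eq_Icc 1 p).symm,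
        Finset.sum_Ico_eq_sum_range]
      simp only [Nat.add_sub_cancel]
      refine Finset.sum_congr rfl fun i _ => ?_
      rw [Nat.add_comm 1 i]
    have hrow : ∀ k ∈ Finset.Icc 1 p,
        (ε k : ℝ) * ((Nf p ε k : ℕ) : ℝ) / (k.factorial : ℝ) *
            (Polynomial.derivative^[k] P).eval
              (if k = p then t₁ else if ε k = ε (k + 1) then t₁ else t₂) * (t₂ - t₁) ^ k
          = ∑ m ∈ Finset.Icc 1 p, Wf p ε P t₁ t₂ k m := by
      intro k hk
      obtain ⟨hk1, hkp⟩ := Finset.mem_Icc.mp hk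
      have hkfac : (k.factorial : ℝ) ≠ 0 := Nat.cast_ne_zero.mpr (Nat.factorial_ne_zero k)
      have hεg := hNM k hk1
      by_cases hchg : k < p ∧ ε k ≠ ε (k + 1)
      · -- point is t₂
        have hpt : (if k = p then t₁ else if ε k = ε (k + 1) then t₁ else t₂) = t₂ := by
          rw [if_neg (by omega), if_neg hchg.2]
        have hQdeg : (Polynomial.derivative^[k] P).natDegree ≤ p - k := by
          have h2 := Polynomial.natDegree_iterate_derivative P k
          rw [hdeg] at h2
          exact h2
        have hTQ : (Polynomial.derivative^[k] P).eval t₂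
            = ∑ j ∈ Finset.range (p - k + 1),
                (Polynomial.derivative^[k + j] P).eval t₁ * (t₂ - t₁) ^ j
                  / (j.factorial : ℝ) := by
          rw [taylor_expand (Polynomial.derivative^[k] P) (p - k) hQdeg t₁ t₂]
          refine Finset.sum_congr rfl fun j _ => ?_
          rw [show k + j = j + k from Nat.add_comm k j, Function.iterate_add_apply]
        rw [hpt, hTQ]
        have hsub : Finset.Icc k p ⊆ Finset.Icc 1 p := Finset.Icc_subset_Icc (by omega) le_rfl
        have hzero : ∀ m ∈ Finset.Icc 1 p, m ∉ Finset.Icc k p → Wf p ε P t₁ t₂ k m = 0 := by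
          intro m hm hnm
          have h1 := Finset.mem_Icc.mp hm
          have h2 : ¬ (k ≤ m ∧ m ≤ p) := fun h => hnm (Finset.mem_Icc.mpr h)
          unfold Wf
          rw [if_neg (by omega : ¬ (k ≤ m ∧ ((k < p ∧ ε k ≠ ε (k + 1)) ∨ k = m)))]
          simp
        rw [← Finset.sum_subset hsub hzero,
          show Finset.Icc k p = Finset.Ico k (p + 1) from (Finset.Ico_add_one_right_eq_Icc k p).symm,
          Finset.sum_Ico_eq_sum_range, show p + 1 - k = p - k + 1 by omega,
          Finset.mul_sum, Finset.sum_mul]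
        refine Finset.sum_congr rfl fun j _ => ?_
        unfold Wf
        rw [if_pos (show k ≤ k + j ∧ ((k < p ∧ ε k ≠ ε (k + 1)) ∨ k = k + j) from
          ⟨Nat.le_add_right k j, Or.inl hchg⟩)]
        have hjfac : (j.factorial : ℝ) ≠ 0 := Nat.cast_ne_zero.mpr (Nat.factorial_ne_zero j)
        have hkjfac : ((k + j).factorial : ℝ) ≠ 0 :=
          Nat.cast_ne_zero.mpr (Nat.factorial_ne_zero (k + j))
        have hfact : ((k + j).factorial : ℝ)
            = ((k + j).choose k : ℝ) * (k.factorial : ℝ) * (j.factorial : ℝ) := by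
          have hnat : (k + j).choose k * k.factorial * j.factorial = (k + j).factorial := by
            have h := Nat.choose_mul_factorial_mul_factorial (Nat.le_add_right k j)
            simpa [Nat.add_sub_cancel_left] using h
          exact_mod_cast hnat.symm
        have hchoose : (((k + j).choose k : ℕ) : ℝ) ≠ 0 :=
          Nat.cast_ne_zero.mpr (Nat.choose_pos (Nat.le_add_right k j)).ne'
        rw [div_mul_eq_mul_div, div_mul_eq_mul_div]
        rw [show (ε k : ℝ) * ((Nf p ε k : ℕ) : ℝ)
            = ((ε k * gseq p ε (k - 1) k : ℤ) : ℝ) from hεg]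
        push_cast
        rw [hfact]
        field_simp [hchoose]
        ring
      · -- point is t₁
        have hpt : (if k = p then t₁ else if ε k = ε (k + 1) then t₁ else t₂) = t₁ := by
          by_cases hkp' : k = p
          · rw [if_pos hkp']
          · rw [if_neg hkp', if_pos (by
              by_contra hne
              exact hchg ⟨by omega, hne⟩)]
        rw [hpt]
        rw [Finset.sum_eq_single_of_mem k hk (by
          intro m hm hne
          unfold Wf
          rw [if_neg (show ¬ (k ≤ m ∧ ((k < p ∧ ε k ≠ ε (k + 1)) ∨ k = m)) by
            rintro ⟨-, hor | hor⟩
            · exact hchg hor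
            · exact hne hor.symm)]
          simp)]
        unfold Wf
        rw [if_pos (show k ≤ k ∧ ((k < p ∧ ε k ≠ ε (k + 1)) ∨ k = k) from
          ⟨le_rfl, Or.inr rfl⟩)]
        rw [Nat.choose_self]
        rw [div_mul_eq_mul_div, div_mul_eq_mul_div]
        rw [show (ε k : ℝ) * ((Nf p ε k : ℕ) : ℝ)
            = ((ε k * gseq p ε (k - 1) k : ℤ) : ℝ) from hεg]
        push_cast
        ring
    have hcol : ∀ m ∈ Finset.Icc 1 p,
        (∑ k ∈ Finset.Icc 1 p, Wf p ε P t₁ t₂ k m)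
          = (Polynomial.derivative^[m] P).eval t₁ * (t₂ - t₁) ^ m / (m.factorial : ℝ) := by
      intro m hm
      obtain ⟨hm1, hmp⟩ := Finset.mem_Icc.mp hm
      have hsub : Finset.Icc 1 m ⊆ Finset.Icc 1 p := Finset.Icc_subset_Icc le_rfl hmp
      have hzero : ∀ k ∈ Finset.Icc 1 p, k ∉ Finset.Icc 1 m → Wf p ε P t₁ t₂ k m = 0 := by
        intro k hk hnk
        have h1 := Finset.mem_Icc.mp hk
        have h2 : ¬ (1 ≤ k ∧ k ≤ m) := fun h => hnk (Finset.mem_Icc.mpr h)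
        unfold Wf
        rw [if_neg (by omega : ¬ (k ≤ m ∧ ((k < p ∧ ε k ≠ ε (k + 1)) ∨ k = m)))]
        simp
      rw [← Finset.sum_subset hsub hzero]
      have hWsimp : ∀ k ∈ Finset.Icc 1 m,
          Wf p ε P t₁ t₂ k m
            = (((if (k < p ∧ ε k ≠ ε (k + 1)) ∨ k = m then
                (m.choose k : ℤ) * (ε k * gseq p ε (k - 1) k) else 0) : ℤ) : ℝ)
              * ((Polynomial.derivative^[m] P).eval t₁ * (t₂ - t₁) ^ m / (m.factorial : ℝ)) := by
        intro k hk
        have hkm := (Finset.mem_Icc.mp hk).2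
        by_cases hc : (k < p ∧ ε k ≠ ε (k + 1)) ∨ k = m
        · unfold Wf
          rw [if_pos (show k ≤ m ∧ ((k < p ∧ ε k ≠ ε (k + 1)) ∨ k = m) from ⟨hkm, hc⟩),
            if_pos hc]
        · unfold Wf
          rw [if_neg (show ¬ (k ≤ m ∧ ((k < p ∧ ε k ≠ ε (k + 1)) ∨ k = m)) from
            fun h => hc h.2), if_neg hc]
      rw [Finset.sum_congr rfl hWsimp, ← Finset.sum_mul, ← Int.cast_sum,
        gseq_CI p ε hε hε1 m hm1 hmp]
      simp
    rw [hTaylorP, hsplit]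
    congr 1
    rw [Finset.sum_congr rfl hrow, Finset.sum_comm, Finset.sum_congr rfl hcol]
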